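/- Let G be a probability measure supported on a non-degenerate compact interval S ⊂ ℝ. Let {Θ_n}_{n∈ℕ} be a decreasing sequence of non-degenerate subintervals of S produced by the sequential barycenter construction (each Θ_{n+1} is one of the two pieces of Θ_n obtained by splitting Θ_n at its conditional G-barycenter). Then the Lebesgue measure |Θ_n| tends to 0 as n → ∞. -/

import Mathlib

open MeasureTheory Set

/-- The (topological) support of a measure on ℝ. -/
def msupport (μ : Measure ℝ) : Set ℝ := {x | ∀ U ∈ nhds x, μ U ≠ 0}

/-- Conditional barycenter of a measure on a set. -/
noncomputable def condBary (μ : Measure ℝ) (A : Set ℝ) : ℝ :=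
  (∫ x in A, x ∂μ) / (μ A).toReal

/-- Let `G` be a probability measure supported on a non-degenerate compact interval `S ⊆ ℝ`,
and let `{Θ_n}` be a decreasing sequence of non-degenerate subintervals of `S` produced by the
sequential barycenter construction (each `Θ_{n+1}` is one of the two pieces of `Θ_n` obtained by
splitting at the conditional barycenter). Then the Lebesgue measure `|Θ_n|` tends to `0`. -/
theorem stmt_3 (μ : Measure ℝ) [IsProbabilityMeasure μ] (S : Set ℝ)
    (hsupp : msupport μ = S) (hScomp : IsCompact S) (hSconn : S.OrdConnected)
    (hSnd : (interior S).Nonempty)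
    (Θ : ℕ → Set ℝ) (hsub : ∀ n, Θ n ⊆ S)
    (hconn : ∀ n, (Θ n).OrdConnected)
    (hnd : ∀ n, (interior (Θ n)).Nonempty)
    (hpos : ∀ n, 0 < μ (Θ n))
    (hsplit : ∀ n, Θ (n + 1) = Θ n ∩ Set.Iic (condBary μ (Θ n)) ∨
                   Θ (n + 1) = Θ n ∩ Set.Ioi (condBary μ (Θ n))) :
    Filter.Tendsto (fun n => volume (Θ n)) Filter.atTop (nhds 0) := by
  classical
  have hanti : Antitone Θ := antitone_nat_of_succ_le (fun n => by
    rcases hsplit n with h | h <;> rw [h] <;> exact inter_subset_left)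
  have hne : ∀ n, (Θ n).Nonempty := fun n =>
    ((hnd n).mono interior_subset)
  have hmeasn : ∀ n, MeasurableSet (Θ n) := fun n => (hconn n).measurableSet
  have hbddA : ∀ n, BddAbove (Θ n) := fun n => hScomp.bddAbove.mono (hsub n)
  have hbddB : ∀ n, BddBelow (Θ n) := fun n => hScomp.bddBelow.mono (hsub n)
  set a : ℕ → ℝ := fun n => sInf (Θ n) with ha
  set c : ℕ → ℝ := fun n => sSup (Θ n) with hc
  have hamono : Monotone a := fun m n hmn => csInf_le_csInf (hbddB m) (hne n) (hanti hmn)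
  have hcmono : Antitone c := fun m n hmn => csSup_le_csSup (hbddA m) (hne n) (hanti hmn)
  have hsubIcc : ∀ n, Θ n ⊆ Icc (a n) (c n) := fun n x hx =>
    ⟨csInf_le (hbddB n) hx, le_csSup (hbddA n) hx⟩
  have hIoosub : ∀ n, Ioo (a n) (c n) ⊆ Θ n := by
    intro n x hx
    obtain ⟨p, hp, hpx⟩ := exists_lt_of_csInf_lt (hne n) hx.1
    obtain ⟨q, hq, hxq⟩ := exists_lt_of_lt_csSup (hne n) hx.2
    exact (hconn n).out hp hq ⟨hpx.le, hxq.le⟩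
  have hvol : ∀ n, volume (Θ n) = ENNReal.ofReal (c n - a n) := by
    intro n
    apply le_antisymm
    · calc volume (Θ n) ≤ volume (Icc (a n) (c n)) := measure_mono (hsubIcc n)
        _ = ENNReal.ofReal (c n - a n) := Real.volume_Icc
    · calc ENNReal.ofReal (c n - a n) = volume (Ioo (a n) (c n)) := Real.volume_Ioo.symm
        _ ≤ volume (Θ n) := measure_mono (hIoosub n)
  -- bounds for the endpoint sequences
  obtain ⟨x0, hx0⟩ := hne 0
  have hbddra : BddAbove (Set.range a) := by
    refine ⟨sSup S, forall_mem_range.2 fun n => ?_⟩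
    obtain ⟨x, hx⟩ := hne n
    exact le_trans (csInf_le (hbddB n) hx) (le_csSup hScomp.bddAbove (hsub n hx))
  have hbddrc : BddBelow (Set.range c) := by
    refine ⟨sInf S, forall_mem_range.2 fun n => ?_⟩
    obtain ⟨x, hx⟩ := hne n
    exact le_trans (csInf_le hScomp.bddBelow (hsub n hx)) (le_csSup (hbddA n) hx)
  set A := ⨆ n, a n with hA
  set C := ⨅ n, c n with hC
  have htA : Filter.Tendsto a Filter.atTop (nhds A) := tendsto_atTop_ciSup hamono hbddra
  have htC : Filter.Tendsto c Filter.atTop (nhds C) := tendsto_atTop_ciInf hcmono hbddrc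
  have hvt : Filter.Tendsto (fun n => volume (Θ n)) Filter.atTop
      (nhds (ENNReal.ofReal (C - A))) := by
    simp only [hvol]
    exact (ENNReal.continuous_ofReal.tendsto _).comp (htC.sub htA)
  rcases le_or_gt C A with hCA | hAC
  · have h0 : ENNReal.ofReal (C - A) = 0 := by
      rw [ENNReal.ofReal_eq_zero]; linarith
    rwa [h0] at hvt
  · exfalso
    have hAle : ∀ n, a n ≤ A := fun n => le_ciSup hbddra n
    have hCle : ∀ n, C ≤ c n := fun n => ciInf_le hbddrc n
    have hIooAC : ∀ n, Ioo A C ⊆ Θ n := fun n x hx =>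
      hIoosub n ⟨lt_of_le_of_lt (hAle n) hx.1, lt_of_lt_of_le hx.2 (hCle n)⟩
    set T : Set ℝ := ⋂ n, Θ n with hT
    have hTmeas : MeasurableSet T := MeasurableSet.iInter fun n => hmeasn n
    have hIooT : Ioo A C ⊆ T := subset_iInter hIooAC
    have hTIcc : T ⊆ Icc A C := by
      intro x hx
      have hxn : ∀ n, x ∈ Θ n := fun n => mem_iInter.1 hx n
      exact ⟨ciSup_le fun n => (hsubIcc n (hxn n)).1, le_ciInf fun n => (hsubIcc n (hxn n)).2⟩
    -- positivity of μ on open subintervals of S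
    have hopen_pos : ∀ u v : ℝ, u < v → Ioo u v ⊆ S → 0 < μ (Ioo u v) := by
      intro u v huv hUS
      have hx : (u + v) / 2 ∈ Ioo u v := ⟨by linarith, by linarith⟩
      have hxS : ((u + v) / 2) ∈ msupport μ := by rw [hsupp]; exact hUS hx
      exact pos_iff_ne_zero.2 (hxS _ (Ioo_mem_nhds hx.1 hx.2))
    have hIooS : Ioo A C ⊆ S := fun x hx => hsub 0 (hIooAC 0 hx)
    have hμT : 0 < μ T := lt_of_lt_of_le (hopen_pos A C hAC hIooS) (measure_mono hIooT)
    set M := (μ T).toReal with hM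
    have hMpos : 0 < M := ENNReal.toReal_pos hμT.ne' (measure_ne_top μ T)
    -- integrability
    have hint : IntegrableOn (fun x : ℝ => x) S μ :=
      ContinuousOn.integrableOn_compact hScomp continuousOn_id
    have hintT : IntegrableOn (fun x : ℝ => x) T μ :=
      hint.mono_set fun x hx => hsub 0 (mem_iInter.1 hx 0)
    -- limits of integrals and measures
    set I := ∫ x in T, x ∂μ with hI
    have htI : Filter.Tendsto (fun n => ∫ x in Θ n, x ∂μ) Filter.atTop (nhds I) :=
      tendsto_setIntegral_of_antitone hmeasn hanti ⟨0, hint.mono_set (hsub 0)⟩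
    have htM : Filter.Tendsto (fun n => (μ (Θ n)).toReal) Filter.atTop (nhds M) :=
      (ENNReal.tendsto_toReal (measure_ne_top μ T)).comp
        (tendsto_measure_iInter_atTop (fun n => (hmeasn n).nullMeasurableSet) hanti
          ⟨0, measure_ne_top μ _⟩)
    have htB : Filter.Tendsto (fun n => condBary μ (Θ n)) Filter.atTop (nhds (I / M)) := by
      simp only [condBary]
      exact htI.div htM hMpos.ne'
    -- a.e. nonneg facts on T
    have haeC : 0 ≤ᵐ[μ.restrict T] fun x => C - x := by
      rw [Filter.EventuallyLE, ae_restrict_iff' hTmeas]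
      exact Filter.Eventually.of_forall fun x hx => sub_nonneg.2 (hTIcc hx).2
    have haeA : 0 ≤ᵐ[μ.restrict T] fun x => x - A := by
      rw [Filter.EventuallyLE, ae_restrict_iff' hTmeas]
      exact Filter.Eventually.of_forall fun x hx => sub_nonneg.2 (hTIcc hx).1
    set m := (A + C) / 2 with hm
    have hAm : A < m := by rw [hm]; linarith
    have hmC : m < C := by rw [hm]; linarith
    have hIooAmT : Ioo A m ⊆ T := fun x hx => hIooT ⟨hx.1, lt_trans hx.2 hmC⟩
    have hIoomCT : Ioo m C ⊆ T := fun x hx => hIooT ⟨lt_trans hAm hx.1, hx.2⟩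
    have hμAm : 0 < (μ (Ioo A m)).toReal :=
      ENNReal.toReal_pos (hopen_pos A m hAm fun x hx => hIooS ⟨hx.1, lt_trans hx.2 hmC⟩).ne'
        (measure_ne_top μ _)
    have hμmC : 0 < (μ (Ioo m C)).toReal :=
      ENNReal.toReal_pos (hopen_pos m C hmC fun x hx => hIooS ⟨lt_trans hAm hx.1, hx.2⟩).ne'
        (measure_ne_top μ _)
    have hTS : T ⊆ S := fun x hx => hsub 0 (mem_iInter.1 hx 0)
    have hintCsub : IntegrableOn (fun x : ℝ => C - x) T μ :=
      (integrableOn_const (measure_ne_top μ T)).sub hintT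
    have hintAsub : IntegrableOn (fun x : ℝ => x - A) T μ :=
      hintT.sub (integrableOn_const (measure_ne_top μ T))
    -- I < C * M
    have hup : I < C * M := by
      have h1 : (μ (Ioo A m)).toReal * (C - m) ≤ ∫ x in Ioo A m, (C - x) ∂μ := by
        have := setIntegral_mono_on (f := fun _ : ℝ => C - m) (g := fun x : ℝ => C - x)
          (μ := μ) (s := Ioo A m)
          (integrableOn_const (measure_ne_top μ _))
          (hintCsub.mono_set hIooAmT) measurableSet_Ioo
          (fun x hx => by have := hx.2; beta_reduce; linarith)
        simpa [setIntegral_const, smul_eq_mul, Measure.real] using this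
      have h2 : ∫ x in Ioo A m, (C - x) ∂μ ≤ ∫ x in T, (C - x) ∂μ :=
        setIntegral_mono_set hintCsub haeC (HasSubset.Subset.eventuallyLE hIooAmT)
      have h3 : ∫ x in T, (C - x) ∂μ = C * M - I := by
        rw [integral_sub (integrableOn_const (C := C) (measure_ne_top μ T)) hintT]
        simp [setIntegral_const, smul_eq_mul, mul_comm, hM, hI, Measure.real]
      have h4 : 0 < (μ (Ioo A m)).toReal * (C - m) :=
        mul_pos hμAm (by linarith)
      linarith
    -- A * M < I
    have hlo : A * M < I := by
      have h1 : (μ (Ioo m C)).toReal * (m - A) ≤ ∫ x in Ioo m C, (x - A) ∂μ := by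
        have := setIntegral_mono_on (f := fun _ : ℝ => m - A) (g := fun x : ℝ => x - A)
          (μ := μ) (s := Ioo m C)
          (integrableOn_const (measure_ne_top μ _))
          (hintAsub.mono_set hIoomCT) measurableSet_Ioo
          (fun x hx => by have := hx.1; beta_reduce; linarith)
        simpa [setIntegral_const, smul_eq_mul, Measure.real] using this
      have h2 : ∫ x in Ioo m C, (x - A) ∂μ ≤ ∫ x in T, (x - A) ∂μ :=
        setIntegral_mono_set hintAsub haeA (HasSubset.Subset.eventuallyLE hIoomCT)
      have h3 : ∫ x in T, (x - A) ∂μ = I - A * M := by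
        rw [integral_sub hintT (integrableOn_const (C := A) (measure_ne_top μ T))]
        simp [setIntegral_const, smul_eq_mul, mul_comm, hM, hI, Measure.real]
      have h4 : 0 < (μ (Ioo m C)).toReal * (m - A) :=
        mul_pos hμmC (by linarith)
      linarith
    have hBlt : I / M < C := (div_lt_iff₀ hMpos).2 (by linarith)
    have hBgt : A < I / M := (lt_div_iff₀ hMpos).2 (by linarith)
    -- eventually the barycenter is in (A, C)
    have hev : ∀ᶠ n in Filter.atTop, condBary μ (Θ n) ∈ Ioo A C :=
      htB (Ioo_mem_nhds hBgt hBlt)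
    obtain ⟨n, hn⟩ := hev.exists
    -- but each barycenter is outside (A, C)
    rcases hsplit n with h | h
    · have h1 : c (n + 1) ≤ condBary μ (Θ n) :=
        csSup_le (hne (n + 1)) fun x hx => by rw [h] at hx; exact hx.2
      exact absurd hn.2 (not_lt.2 (le_trans (hCle (n + 1)) h1))
    · have h1 : condBary μ (Θ n) ≤ a (n + 1) :=
        le_csInf (hne (n + 1)) fun x hx => by rw [h] at hx; exact le_of_lt hx.2
      exact absurd hn.1 (not_lt.2 (le_trans h1 (hAle (n + 1))))
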